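/- Let F : ℝⁿ → ℝᵐ be differentiable with Jacobian J, and suppose ‖J(y) − J(z)‖ ≤ κ_lj‖y − z‖, ‖J(y)‖ ≤ κ_lf and ‖F(y)‖ ≤ κ_bf for all y, z ∈ ℝⁿ. Let x ∈ ℝⁿ, θ > 0, and let J_m ∈ ℝ^{m×n} satisfy ‖J_m‖ ≤ κ_bmj, ‖J_m − J(x)‖ ≤ κ_ej/θ and J_mᵀF(x) ≠ 0. Let d be the LM step for (J_m, F(x), λ) with λ = θ‖J_mᵀF(x)‖, and suppose ‖d‖ ≤ ‖J_mᵀF(x)‖/‖J_mᵀJ_m‖. Define ρ = (‖F(x)‖² − ‖F(x + d)‖²)/(‖F(x)‖² − ‖F(x) + J_m d‖²). Then |ρ − 1| ≤ (κ_lj κ_bf + κ_lf² + 2κ_bf κ_ej + κ_bmj²)/(θ‖J_mᵀF(x)‖). -/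

import Mathlib

open Filter Matrix MeasureTheory

/-- The map `x ↦ A x` from `ℝⁿ` to `ℝᵖ` with the Euclidean (`ℓ²`) structure. -/
noncomputable def mulVecE {p n : ℕ} (A : Matrix (Fin p) (Fin n) ℝ)
    (x : EuclideanSpace ℝ (Fin n)) : EuclideanSpace ℝ (Fin p) :=
  (WithLp.equiv 2 (Fin p → ℝ)).symm (A.mulVec ((WithLp.equiv 2 (Fin n → ℝ)) x))

/-- The spectral norm (ℓ²-operator norm) of a matrix. -/
noncomputable def opNorm {p n : ℕ} (A : Matrix (Fin p) (Fin n) ℝ) : ℝ :=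
  sSup {r : ℝ | ∃ x : EuclideanSpace ℝ (Fin n), ‖x‖ ≤ 1 ∧ r = ‖mulVecE A x‖}

/-- A matrix as a continuous linear map between Euclidean spaces. -/
noncomputable def jacCLM {p n : ℕ} (A : Matrix (Fin p) (Fin n) ℝ) :
    EuclideanSpace ℝ (Fin n) →L[ℝ] EuclideanSpace ℝ (Fin p) :=
  LinearMap.toContinuousLinearMap (Matrix.toEuclideanLin A)

lemma mulVecE_eq {p n : ℕ} (A : Matrix (Fin p) (Fin n) ℝ) (x : EuclideanSpace ℝ (Fin n)) :
    mulVecE A x = jacCLM A x := rfl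

lemma opNorm_eq {p n : ℕ} (A : Matrix (Fin p) (Fin n) ℝ) : opNorm A = ‖jacCLM A‖ := by
  rw [← ContinuousLinearMap.sSup_unitClosedBall_eq_norm (jacCLM A)]
  refine congrArg sSup ?_
  ext r
  simp only [Set.mem_setOf_eq, Set.mem_image, Metric.mem_closedBall, dist_zero_right,
    mulVecE_eq, eq_comm]

lemma jacCLM_sub {p n : ℕ} (A B : Matrix (Fin p) (Fin n) ℝ) :
    jacCLM (A - B) = jacCLM A - jacCLM B := by
  ext x
  simp [jacCLM, map_sub]

lemma jacCLM_mul {p n q : ℕ} (A : Matrix (Fin p) (Fin n) ℝ) (B : Matrix (Fin n) (Fin q) ℝ) :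
    jacCLM (A * B) = (jacCLM A).comp (jacCLM B) := by
  ext x
  simp [jacCLM, Matrix.toEuclideanLin_apply, Matrix.mulVec_mulVec]

lemma jacCLM_transpose {p n : ℕ} (A : Matrix (Fin p) (Fin n) ℝ) :
    jacCLM Aᵀ = ContinuousLinearMap.adjoint (jacCLM A) := by
  rw [jacCLM, ← Matrix.conjTranspose_eq_transpose_of_trivial,
    Matrix.toEuclideanLin_conjTranspose_eq_adjoint, LinearMap.adjoint_toContinuousLinearMap]
  rfl

lemma jacCLM_norm_transpose {p n : ℕ} (A : Matrix (Fin p) (Fin n) ℝ) :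
    ‖jacCLM Aᵀ‖ = ‖jacCLM A‖ := by
  rw [jacCLM_transpose]
  exact LinearIsometryEquiv.norm_map
    (ContinuousLinearMap.adjoint : (EuclideanSpace ℝ (Fin n) →L[ℝ] EuclideanSpace ℝ (Fin p)) ≃ₗᵢ⋆[ℝ] _) _

lemma opNorm_nonneg {p n : ℕ} (A : Matrix (Fin p) (Fin n) ℝ) : 0 ≤ opNorm A := by
  rw [opNorm_eq]; exact norm_nonneg _

lemma norm_sq_B {n m : ℕ} (A : Matrix (Fin m) (Fin n) ℝ) :
    ‖jacCLM A‖ * ‖jacCLM A‖ = opNorm (Aᵀ * A) := by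
  rw [opNorm_eq, jacCLM_mul, jacCLM_transpose, ContinuousLinearMap.norm_adjoint_comp_self]

/-- Bound on `|ρ − 1|`, where `ρ` is the ratio of the actual reduction to the
predicted reduction along the LM step `d`. -/
theorem ratio_minus_one_bound {n m : ℕ}
    (F : EuclideanSpace ℝ (Fin n) → EuclideanSpace ℝ (Fin m))
    (J : EuclideanSpace ℝ (Fin n) → Matrix (Fin m) (Fin n) ℝ)
    (hF : ∀ z, HasFDerivAt F (jacCLM (J z)) z)
    (κlj κlf κbf : ℝ)
    (hJlip : ∀ y z, opNorm (J y - J z) ≤ κlj * ‖y - z‖)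
    (hJb : ∀ y, opNorm (J y) ≤ κlf)
    (hFb : ∀ y, ‖F y‖ ≤ κbf)
    (x : EuclideanSpace ℝ (Fin n)) (θ : ℝ) (hθ : 0 < θ)
    (Jm : Matrix (Fin m) (Fin n) ℝ) (κbmj κej : ℝ)
    (hJmb : opNorm Jm ≤ κbmj)
    (hJmacc : opNorm (Jm - J x) ≤ κej / θ)
    (hJmF : mulVecE Jmᵀ (F x) ≠ 0)
    (d : EuclideanSpace ℝ (Fin n))
    (hd : (Jmᵀ * Jm + (θ * ‖mulVecE Jmᵀ (F x)‖) •
        (1 : Matrix (Fin n) (Fin n) ℝ)).mulVec d = -(Jmᵀ.mulVec (F x)))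
    (hdsmall : ‖d‖ ≤ ‖mulVecE Jmᵀ (F x)‖ / opNorm (Jmᵀ * Jm))
    (ρ : ℝ)
    (hρ : ρ = (‖F x‖ ^ 2 - ‖F (x + d)‖ ^ 2) /
      (‖F x‖ ^ 2 - ‖F x + mulVecE Jm d‖ ^ 2)) :
    |ρ - 1| ≤ (κlj * κbf + κlf ^ 2 + 2 * κbf * κej + κbmj ^ 2) /
      (θ * ‖mulVecE Jmᵀ (F x)‖) := by
  rcases Nat.eq_zero_or_pos n with hn0 | hn
  · subst hn0
    refine absurd ?_ hJmF
    ext i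
    exact i.elim0
  set u := F x with hu
  set w := F (x + d) with hw
  set g : EuclideanSpace ℝ (Fin n) := mulVecE Jmᵀ u with hg
  set lam : ℝ := θ * ‖g‖ with hlam
  set v : EuclideanSpace ℝ (Fin m) := mulVecE Jm d with hv
  have hgpos : 0 < ‖g‖ := norm_pos_iff.mpr hJmF
  have hlampos : 0 < lam := mul_pos hθ hgpos
  -- nonnegativity of constants
  have hκbf : 0 ≤ κbf := le_trans (norm_nonneg (F x)) (hFb x)
  have hκlf : 0 ≤ κlf := le_trans (opNorm_nonneg _) (hJb x)
  have hκbmj : 0 ≤ κbmj := le_trans (opNorm_nonneg _) hJmb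
  have hκej : 0 ≤ κej := by
    have h := le_trans (opNorm_nonneg _) hJmacc
    have h2 := mul_nonneg h hθ.le
    rwa [div_mul_cancel₀ _ (ne_of_gt hθ)] at h2
  have hκlj : 0 ≤ κlj := by
    have h := hJlip (EuclideanSpace.single ⟨0, hn⟩ (1:ℝ)) 0
    have h0 := opNorm_nonneg (J (EuclideanSpace.single ⟨0, hn⟩ (1:ℝ)) - J 0)
    rw [sub_zero] at h
    have h1 : ‖EuclideanSpace.single (⟨0, hn⟩ : Fin n) (1:ℝ)‖ = 1 := by
      rw [EuclideanSpace.norm_single]; norm_num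
    rw [h1, mul_one] at h
    linarith only [h, h0]
  -- the LM equation in Euclidean space
  have h1 : mulVecE (Jmᵀ * Jm) d + lam • d = -g := by
    show (WithLp.equiv 2 (Fin n → ℝ)).symm ((Jmᵀ * Jm).mulVec d) + lam • d
        = (WithLp.equiv 2 (Fin n → ℝ)).symm (-(Jmᵀ.mulVec u))
    rw [← hd, Matrix.add_mulVec, Matrix.smul_mulVec, Matrix.one_mulVec]
    rfl
  have h2 : g = -(mulVecE (Jmᵀ * Jm) d + lam • d) := by rw [h1, neg_neg]
  have hdne : d ≠ 0 := by
    intro h0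
    apply hJmF
    rw [h0] at h1
    have : mulVecE (Jmᵀ * Jm) (0 : EuclideanSpace ℝ (Fin n)) = 0 := by
      show (WithLp.equiv 2 (Fin n → ℝ)).symm _ = _
      rw [show (WithLp.equiv 2 (Fin n → ℝ)) (0 : EuclideanSpace ℝ (Fin n)) = 0 from rfl,
        Matrix.mulVec_zero]
      rfl
    rw [this, smul_zero, add_zero] at h1
    rw [hg, hu] at h1 ⊢
    exact (neg_eq_zero.mp h1.symm)
  have hdpos : 0 < ‖d‖ := norm_pos_iff.mpr hdne
  -- adjoint property
  have hadj : ∀ (a : EuclideanSpace ℝ (Fin m)) (b : EuclideanSpace ℝ (Fin n)),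
      (inner ℝ (mulVecE Jmᵀ a) b : ℝ) = inner ℝ a (mulVecE Jm b) := by
    intro a b
    rw [mulVecE_eq, mulVecE_eq, jacCLM_transpose]
    exact ContinuousLinearMap.adjoint_inner_left _ _ _
  have hBd : ∀ b : EuclideanSpace ℝ (Fin n),
      mulVecE (Jmᵀ * Jm) b = mulVecE Jmᵀ (mulVecE Jm b) := by
    intro b
    rw [mulVecE_eq, mulVecE_eq, mulVecE_eq, jacCLM_mul]
    rfl
  -- inner products
  have h3 : (inner ℝ g d : ℝ) = -(‖v‖^2 + lam * ‖d‖^2) := by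
    rw [h2, inner_neg_left, inner_add_left, real_inner_smul_left, hBd d, hadj,
      real_inner_self_eq_norm_sq, real_inner_self_eq_norm_sq]
  have huv : (inner ℝ u v : ℝ) = inner ℝ g d := (hadj u d).symm
  have hpred : ‖u‖^2 - ‖u + v‖^2 = ‖v‖^2 + 2 * lam * ‖d‖^2 := by
    rw [norm_add_sq_real, huv, h3]; ring
  -- norm facts for the g-lower bound on pred
  have hβ : ‖jacCLM Jm‖ * ‖jacCLM Jm‖ = opNorm (Jmᵀ * Jm) := norm_sq_B Jm
  have hg_le : ‖g‖ ≤ ‖mulVecE (Jmᵀ * Jm) d‖ + lam * ‖d‖ := by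
    rw [h2, norm_neg]
    refine le_trans (norm_add_le _ _) ?_
    rw [norm_smul, Real.norm_eq_abs, abs_of_pos hlampos]
  have hBd_le : ‖mulVecE (Jmᵀ * Jm) d‖ ≤ ‖jacCLM Jm‖ * ‖v‖ := by
    rw [hBd d, mulVecE_eq]
    calc ‖jacCLM Jmᵀ v‖ ≤ ‖jacCLM Jmᵀ‖ * ‖v‖ := ContinuousLinearMap.le_opNorm _ _
      _ = ‖jacCLM Jm‖ * ‖v‖ := by rw [jacCLM_norm_transpose]
  -- analysis bounds
  have hb1 : ‖w - u‖ ≤ κlf * ‖d‖ := by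
    have h := (convex_univ :
        Convex ℝ (Set.univ : Set (EuclideanSpace ℝ (Fin n)))).norm_image_sub_le_of_norm_hasFDerivWithin_le
      (f' := fun z => jacCLM (J z))
      (fun z _ => (hF z).hasFDerivWithinAt)
      (fun z _ => by rw [← opNorm_eq]; exact hJb z) (Set.mem_univ x) (Set.mem_univ (x + d))
    simpa [add_sub_cancel_left] using h
  have hb2 : ‖w - u - jacCLM (J x) d‖ ≤ (κlj * ‖d‖) * ‖d‖ := by
    have hconv : Convex ℝ (Metric.closedBall x ‖d‖) := convex_closedBall x ‖d‖
    have hxmem : x ∈ Metric.closedBall x ‖d‖ := Metric.mem_closedBall_self (norm_nonneg d)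
    have hymem : x + d ∈ Metric.closedBall x ‖d‖ := by
      simp [Metric.mem_closedBall, dist_eq_norm]
    have hbound : ∀ z ∈ Metric.closedBall x ‖d‖, ‖jacCLM (J z) - jacCLM (J x)‖ ≤ κlj * ‖d‖ := by
      intro z hz
      rw [← jacCLM_sub, ← opNorm_eq]
      refine le_trans (hJlip z x) ?_
      have hzx : ‖z - x‖ ≤ ‖d‖ := by
        rw [Metric.mem_closedBall, dist_eq_norm] at hz; exact hz
      exact mul_le_mul_of_nonneg_left hzx hκlj
    have h := hconv.norm_image_sub_le_of_norm_hasFDerivWithin_le'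
      (f' := fun z => jacCLM (J z))
      (fun z _ => (hF z).hasFDerivWithinAt) hbound hxmem hymem
    simpa [add_sub_cancel_left] using h
  have hvle : ‖v‖ ≤ κbmj * ‖d‖ := by
    rw [hv, mulVecE_eq]
    refine le_trans (ContinuousLinearMap.le_opNorm _ _) ?_
    exact mul_le_mul_of_nonneg_right (by rw [← opNorm_eq]; exact hJmb) (norm_nonneg d)
  set E : EuclideanSpace ℝ (Fin m) := w - u - v with hEdef
  have hE : ‖E‖ ≤ κlj * ‖d‖^2 + (κej/θ) * ‖d‖ := by
    have hiden : E = (w - u - jacCLM (J x) d) + (jacCLM (J x) d - jacCLM Jm d) := by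
      rw [hEdef, hv, mulVecE_eq]; abel
    have h4 : ‖jacCLM (J x) d - jacCLM Jm d‖ ≤ (κej/θ) * ‖d‖ := by
      rw [← ContinuousLinearMap.sub_apply, ← jacCLM_sub]
      refine le_trans (ContinuousLinearMap.le_opNorm _ _) ?_
      refine mul_le_mul_of_nonneg_right ?_ (norm_nonneg d)
      rw [← opNorm_eq]
      calc opNorm (J x - Jm) = opNorm (Jm - J x) := by
            rw [opNorm_eq, opNorm_eq, jacCLM_sub, jacCLM_sub, norm_sub_rev]
        _ ≤ κej / θ := hJmacc
    calc ‖E‖ ≤ ‖w - u - jacCLM (J x) d‖ + ‖jacCLM (J x) d - jacCLM Jm d‖ := by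
          rw [hiden]; exact norm_add_le _ _
      _ ≤ (κlj * ‖d‖) * ‖d‖ + (κej/θ) * ‖d‖ := add_le_add hb2 h4
      _ = κlj * ‖d‖^2 + (κej/θ) * ‖d‖ := by ring
  have e1 : ‖w‖^2 = ‖u + v‖^2 + 2 * (inner ℝ (u + v) E : ℝ) + ‖E‖^2 := by
    have hw2 : (u + v) + E = w := by rw [hEdef]; abel
    rw [← hw2, norm_add_sq_real]
  have e2 : ‖w - u‖^2 = ‖v‖^2 + 2 * (inner ℝ v E : ℝ) + ‖E‖^2 := by
    have hw3 : v + E = w - u := by rw [hEdef]; abel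
    rw [← hw3, norm_add_sq_real]
  have e3 : (inner ℝ (u + v) E : ℝ) = inner ℝ u E + inner ℝ v E := inner_add_left _ _ _
  have hiu : |(inner ℝ u E : ℝ)| ≤ κbf * ‖E‖ := by
    refine le_trans (abs_real_inner_le_norm u E) ?_
    exact mul_le_mul_of_nonneg_right (hFb x) (norm_nonneg E)
  -- from now on, only scalar reasoning
  clear_value E v lam g w u
  clear h1 h2 h3 hBd hadj huv hb2 hd hF hJlip hJb hFb hJmb hJmacc hJmF hdne hEdef hg hu hw hv
  have hPpos : 0 < ‖u‖^2 - ‖u + v‖^2 := by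
    rw [hpred]
    have hh := mul_pos hlampos (pow_pos hdpos 2)
    linarith only [sq_nonneg ‖v‖, hh]
  have hP1 : 2 * lam * ‖d‖^2 ≤ ‖u‖^2 - ‖u + v‖^2 := by
    rw [hpred]
    exact le_add_of_nonneg_left (sq_nonneg _)
  have hβd : opNorm (Jmᵀ * Jm) * ‖d‖ ≤ ‖g‖ := by
    rcases lt_or_ge 0 (opNorm (Jmᵀ * Jm)) with hb | hb
    · rw [mul_comm]; exact (le_div_iff₀ hb).mp hdsmall
    · have hb0 : opNorm (Jmᵀ * Jm) = 0 := le_antisymm hb (opNorm_nonneg _)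
      rw [hb0, zero_mul]; exact hgpos.le
  have h5 : ‖jacCLM Jm‖ * ‖jacCLM Jm‖ * (‖d‖ * ‖d‖) ≤ ‖g‖ * ‖d‖ := by
    calc ‖jacCLM Jm‖ * ‖jacCLM Jm‖ * (‖d‖ * ‖d‖) = (opNorm (Jmᵀ * Jm) * ‖d‖) * ‖d‖ := by
          rw [hβ]; ring
      _ ≤ ‖g‖ * ‖d‖ := mul_le_mul_of_nonneg_right hβd (norm_nonneg d)
  have hP2 : ‖g‖ * ‖d‖ ≤ ‖u‖^2 - ‖u + v‖^2 := by
    rw [hpred]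
    have h6 := mul_le_mul_of_nonneg_right hg_le (norm_nonneg d)
    have h7 := mul_le_mul_of_nonneg_right hBd_le (norm_nonneg d)
    nlinarith only [sq_nonneg (‖jacCLM Jm‖ * ‖d‖ - ‖v‖), h5, h6, h7]
  have hexpr : (‖u‖^2 - ‖w‖^2) - (‖u‖^2 - ‖u + v‖^2)
      = -(2 * (inner ℝ u E : ℝ)) - ‖w - u‖^2 + ‖v‖^2 := by
    linarith only [e1, e2, e3]
  have hwu2 : ‖w - u‖^2 ≤ (κlf * ‖d‖)^2 := by
    exact pow_le_pow_left₀ (norm_nonneg _) hb1 2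
  have hv2 : ‖v‖^2 ≤ (κbmj * ‖d‖)^2 := by
    exact pow_le_pow_left₀ (norm_nonneg _) hvle 2
  have hared : |(‖u‖^2 - ‖w‖^2) - (‖u‖^2 - ‖u + v‖^2)|
      ≤ 2 * κbf * ‖E‖ + (κlf * ‖d‖)^2 + (κbmj * ‖d‖)^2 := by
    rw [abs_le]
    have hiu' := abs_le.mp hiu
    constructor
    · rw [hexpr]
      linarith only [hiu'.2, hwu2, sq_nonneg ‖v‖, sq_nonneg (κbmj * ‖d‖)]
    · rw [hexpr]
      linarith only [hiu'.1, hv2, sq_nonneg ‖w - u‖, sq_nonneg (κlf * ‖d‖)]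
  have habs2 : |(‖u‖^2 - ‖w‖^2) - (‖u‖^2 - ‖u + v‖^2)|
      ≤ 2 * κbf * (κlj * ‖d‖^2 + (κej/θ) * ‖d‖) + (κlf * ‖d‖)^2 + (κbmj * ‖d‖)^2 := by
    have hh := mul_le_mul_of_nonneg_left hE (by positivity : (0:ℝ) ≤ 2 * κbf)
    linarith only [hared, hh]
  have m5 : 2 * κbf * ((κej/θ) * ‖d‖) * lam = 2 * κbf * κej * (‖g‖ * ‖d‖) := by
    rw [hlam]; field_simp
  have hRnum : |(‖u‖^2 - ‖w‖^2) - (‖u‖^2 - ‖u + v‖^2)| * lam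
      ≤ (κlj * κbf + κlf^2 + 2 * κbf * κej + κbmj^2) * (‖u‖^2 - ‖u + v‖^2) := by
    have m1 := mul_le_mul_of_nonneg_left hP1 (mul_nonneg hκbf hκlj)
    have m2 := mul_le_mul_of_nonneg_left hP2 (by positivity : (0:ℝ) ≤ 2 * κbf * κej)
    have m3 := mul_le_mul_of_nonneg_left hP1 (by positivity : (0:ℝ) ≤ κlf^2 + κbmj^2)
    have m4 := mul_le_mul_of_nonneg_right habs2 hlampos.le
    have m6 : 0 ≤ (κlf^2 + κbmj^2) * (lam * ‖d‖^2) := by positivity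
    nlinarith only [m1, m2, m3, m4, m5, m6]
  have hfrac : ρ - 1 = ((‖u‖^2 - ‖w‖^2) - (‖u‖^2 - ‖u + v‖^2)) / (‖u‖^2 - ‖u + v‖^2) := by
    rw [hρ, div_sub_one (ne_of_gt hPpos)]
  rw [hfrac, abs_div, abs_of_pos hPpos, div_le_div_iff₀ hPpos hlampos]
  exact hRnum
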